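/- Let u,v,w be three vertices of the same type with edges (u,v),(u,w) present and (v,w) absent, each following the social-capital-homophilic strategy with utility U_x = |N^τ(x)|/κ + I_x/κ. If v and w are both isolated in the subgraph induced by N(u), then adding the edge (v,w) strictly decreases the utility of u, and deleting the edge (u,v) strictly decreases the utility of both u and v provided v contributes to I_u and u contributes to I_v. -/

import Mathlib

open Finset

/-- Number of isolated vertices in the subgraph induced by the neighborhood of `v`. -/
def isoCount {V : Type*} [Fintype V] [DecidableEq V] (G : SimpleGraph V)
    [DecidableRel G.Adj] (v : V) : ℕ :=
  ((G.neighborFinset v).filter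
    (fun u => ∀ w ∈ G.neighborFinset v, ¬ G.Adj u w)).card

/-- The graph obtained from `G` by adding the edge `{a, b}`. -/
def addEdge {V : Type*} (G : SimpleGraph V) (a b : V) : SimpleGraph V where
  Adj x y := (G.Adj x y ∨ ((x = a ∧ y = b) ∨ (x = b ∧ y = a))) ∧ x ≠ y
  symm := by constructor; intro x y h; refine ⟨?_, Ne.symm h.2⟩; rcases h.1 with h | h | h
             · exact Or.inl h.symm
             · exact Or.inr (Or.inr ⟨h.2, h.1⟩)
             · exact Or.inr (Or.inl ⟨h.2, h.1⟩)
  loopless := ⟨fun x h => h.2 rfl⟩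

instance {V : Type*} [DecidableEq V] (G : SimpleGraph V) [DecidableRel G.Adj] (a b : V) :
    DecidableRel (addEdge G a b).Adj := fun x y =>
  inferInstanceAs (Decidable ((G.Adj x y ∨ ((x = a ∧ y = b) ∨ (x = b ∧ y = a))) ∧ x ≠ y))

/-- The graph obtained from `G` by deleting the edge `{a, b}`. -/
def delEdge {V : Type*} (G : SimpleGraph V) (a b : V) : SimpleGraph V where
  Adj x y := G.Adj x y ∧ ¬((x = a ∧ y = b) ∨ (x = b ∧ y = a))
  symm := by constructor; intro x y h; exact ⟨h.1.symm, by tauto⟩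
  loopless := ⟨fun x h => G.irrefl h.1⟩

instance {V : Type*} [DecidableEq V] (G : SimpleGraph V) [DecidableRel G.Adj] (a b : V) :
    DecidableRel (delEdge G a b).Adj := fun x y =>
  inferInstanceAs (Decidable (G.Adj x y ∧ ¬((x = a ∧ y = b) ∨ (x = b ∧ y = a))))


/-- Utility of an agent following the social-capital-homophilic strategy. -/
noncomputable def homCapUtil {V α : Type*} [Fintype V] [DecidableEq V] [DecidableEq α]
    (G : SimpleGraph V) [DecidableRel G.Adj] (τ : V → α) (κ : ℕ) (x : V) : ℝ :=
  (((G.neighborFinset x).filter (fun y => τ y = τ x)).card : ℝ) / κ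
    + (isoCount G x : ℝ) / κ

lemma del_util_lt {V α : Type*} [Fintype V] [DecidableEq V] [DecidableEq α]
    (G H : SimpleGraph V) [DecidableRel G.Adj] [DecidableRel H.Adj]
    (τ : V → α) (κ : ℕ) (hκ : 1 ≤ κ) (a b : V)
    (hH : ∀ x y, H.Adj x y ↔ (G.Adj x y ∧ ¬((x = a ∧ y = b) ∨ (x = b ∧ y = a))))
    (hab : G.Adj a b) (hτab : τ b = τ a)
    (hbIso : ∀ x ∈ G.neighborFinset a, ¬ G.Adj b x) :
    homCapUtil H τ κ a < homCapUtil G τ κ a := by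
  have hκR : (0 : ℝ) < κ := by exact_mod_cast hκ
  have hne : a ≠ b := hab.ne
  have hbmem : b ∈ G.neighborFinset a := by
    simpa [SimpleGraph.mem_neighborFinset] using hab
  have hN : H.neighborFinset a = (G.neighborFinset a).erase b := by
    ext y
    simp only [SimpleGraph.mem_neighborFinset, Finset.mem_erase, hH]
    tauto
  -- typed part
  have htyped : ((H.neighborFinset a).filter (fun y => τ y = τ a)).card <
      ((G.neighborFinset a).filter (fun y => τ y = τ a)).card := by
    rw [hN, Finset.filter_erase]
    exact Finset.card_erase_lt_of_mem (Finset.mem_filter.2 ⟨hbmem, hτab⟩)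
  -- iso part
  have hiso : isoCount H a ≤ isoCount G a := by
    apply Finset.card_le_card
    intro y hy
    rw [Finset.mem_filter] at hy ⊢
    rw [hN] at hy
    obtain ⟨hy1, hy2⟩ := hy
    have hymem : y ∈ G.neighborFinset a := Finset.mem_of_mem_erase hy1
    have hyna : y ≠ a := by
      intro h; subst h
      exact G.irrefl (v := y) (by simpa [SimpleGraph.mem_neighborFinset] using hymem)
    refine ⟨hymem, ?_⟩
    intro x hx
    by_cases hxb : x = b
    · subst hxb
      intro hadj
      exact hbIso y hymem hadj.symm
    · have hx' : x ∈ (G.neighborFinset a).erase b := Finset.mem_erase.2 ⟨hxb, hx⟩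
      have := hy2 x hx'
      intro hadj
      apply this
      rw [hH]
      have hxna : x ≠ a := by
        intro h; subst h
        exact G.irrefl (v := x) (by simpa [SimpleGraph.mem_neighborFinset] using hx)
      refine ⟨hadj, ?_⟩
      rintro (⟨rfl, _⟩ | ⟨_, rfl⟩)
      · exact hyna rfl
      · exact hxna rfl
  unfold homCapUtil
  have h1 : (((H.neighborFinset a).filter (fun y => τ y = τ a)).card : ℝ) / κ <
      (((G.neighborFinset a).filter (fun y => τ y = τ a)).card : ℝ) / κ := by
    apply div_lt_div_of_pos_right _ hκR
    exact_mod_cast htyped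
  have h2 : (isoCount H a : ℝ) / κ ≤ (isoCount G a : ℝ) / κ := by
    gcongr <;> exact_mod_cast hiso
  exact add_lt_add_of_lt_of_le h1 h2

theorem stmt6 {V α : Type*} [Fintype V] [DecidableEq V] [DecidableEq α]
    (G : SimpleGraph V) [DecidableRel G.Adj] (τ : V → α) (κ : ℕ) (hκ : 1 ≤ κ)
    (u v w : V) (hvw : v ≠ w)
    (huv : G.Adj u v) (huw : G.Adj u w) (hnvw : ¬ G.Adj v w)
    (hτ : τ u = τ v ∧ τ v = τ w)
    (hvIso : ∀ x ∈ G.neighborFinset u, ¬ G.Adj v x)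
    (hwIso : ∀ x ∈ G.neighborFinset u, ¬ G.Adj w x) :
    homCapUtil (addEdge G v w) τ κ u < homCapUtil G τ κ u ∧
    ((∀ x ∈ G.neighborFinset u, ¬ G.Adj v x) →
     (∀ x ∈ G.neighborFinset v, ¬ G.Adj u x) →
      homCapUtil (delEdge G u v) τ κ u < homCapUtil G τ κ u ∧
      homCapUtil (delEdge G u v) τ κ v < homCapUtil G τ κ v) := by
  have hκR : (0 : ℝ) < κ := by exact_mod_cast hκ
  constructor
  · -- adding edge (v,w) decreases utility of u
    have hN : (addEdge G v w).neighborFinset u = G.neighborFinset u := by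
      ext y
      rw [SimpleGraph.mem_neighborFinset, SimpleGraph.mem_neighborFinset]
      simp only [addEdge]
      constructor
      · rintro ⟨(h | ⟨rfl, rfl⟩ | ⟨rfl, rfl⟩), hne⟩
        · exact h
        · exact absurd rfl huv.ne
        · exact absurd rfl huw.ne
      · intro h
        exact ⟨Or.inl h, h.ne⟩
    have hwmem : w ∈ G.neighborFinset u := by
      simpa [SimpleGraph.mem_neighborFinset] using huw
    have hvmem : v ∈ G.neighborFinset u := by
      simpa [SimpleGraph.mem_neighborFinset] using huv
    have htyped : ((addEdge G v w).neighborFinset u).filter (fun y => τ y = τ u) =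
        (G.neighborFinset u).filter (fun y => τ y = τ u) := by rw [hN]
    have hiso : isoCount (addEdge G v w) u < isoCount G u := by
      apply Finset.card_lt_card
      rw [Finset.ssubset_iff_of_subset]
      · refine ⟨v, ?_, ?_⟩
        · exact Finset.mem_filter.2 ⟨hvmem, hvIso⟩
        · intro hmem
          rw [Finset.mem_filter, hN] at hmem
          apply hmem.2 w hwmem
          exact (⟨Or.inr (Or.inl ⟨rfl, rfl⟩), hvw⟩ : (G.Adj v w ∨ ((v = v ∧ w = w) ∨ (v = w ∧ w = v))) ∧ v ≠ w)
      · intro y hy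
        rw [Finset.mem_filter, hN] at hy
        rw [Finset.mem_filter]
        refine ⟨hy.1, ?_⟩
        intro x hx hadj
        exact hy.2 x hx (⟨Or.inl hadj, hadj.ne⟩ : (G.Adj y x ∨ ((y = v ∧ x = w) ∨ (y = w ∧ x = v))) ∧ y ≠ x)
    unfold homCapUtil
    rw [htyped]
    have h2 : (isoCount (addEdge G v w) u : ℝ) / κ < (isoCount G u : ℝ) / κ := by
      apply div_lt_div_of_pos_right _ hκR
      exact_mod_cast hiso
    exact (add_lt_add_iff_left _).2 h2
  · intro h1 h2
    constructor
    · apply del_util_lt G _ τ κ hκ u v _ huv hτ.1.symm h1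
      intro x y
      simp only [delEdge]
    · apply del_util_lt G _ τ κ hκ v u _ huv.symm hτ.1 h2
      intro x y
      simp only [delEdge]
      tauto
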